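/- Let d = 1, fix λ > 0, and let S : ℝ → ℝ be continuous on [−4λ, 0] with S(0) = 1, |S(z)| < 1 for all z ∈ [−4λ, 0), and S differentiable at 0 with S′(0) = 1. Then there exists a constant C > 0 (depending only on S and λ) such that for every integer K ≥ 2, with Δt = λ/K² and s_k = −4ΔtK² sin²(π k/(2K)), one has Σ_{k=1}^{K−1} 1/(1 − |S(s_k)|) ≤ C·Δt^{−1}. -/

import Mathlib

open Real


lemma sum_inv_sq_le (n : ℕ) : ∑ k ∈ Finset.Icc 1 n, (1:ℝ) / (k:ℝ)^2 ≤ 2 := by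
  have h : ∀ m : ℕ, 1 ≤ m → ∑ k ∈ Finset.Icc 1 m, (1:ℝ) / (k:ℝ)^2 ≤ 2 - 1/(m:ℝ) := by
    intro m hm
    induction m, hm using Nat.le_induction with
    | base => norm_num
    | succ n hn ih =>
      rw [Finset.sum_Icc_succ_top (by omega)]
      have hn' : (1:ℝ) ≤ (n:ℝ) := by exact_mod_cast hn
      have h1 : (1:ℝ)/((n:ℝ)+1)^2 ≤ 1/(n:ℝ) - 1/((n:ℝ)+1) := by
        rw [div_sub_div _ _ (by linarith) (by linarith)]
        rw [div_le_div_iff₀ (by positivity) (by positivity)]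
        ring_nf
        nlinarith
      push_cast
      linarith
  rcases Nat.eq_zero_or_pos n with h0 | h0
  · simp [h0]
  · have hn' : (0:ℝ) < (n:ℝ) := by exact_mod_cast h0
    have := h n h0
    have : (0:ℝ) < 1/(n:ℝ) := by positivity
    linarith [h n h0]

lemma key_lemma (lam : ℝ) (hlam : 0 < lam) (S : ℝ → ℝ)
    (hcont : ContinuousOn S (Set.Icc (-(4 * lam)) 0))
    (hS0 : S 0 = 1)
    (hSlt : ∀ z ∈ Set.Ico (-(4 * lam)) 0, |S z| < 1)
    (hderiv : HasDerivAt S 1 0) :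
    ∃ c > 0, ∀ z ∈ Set.Ico (-(4 * lam)) 0, c * (-z) ≤ 1 - |S z| := by
  have hlo := (hasDerivAt_iff_isLittleO.mp hderiv).def (by norm_num : (0:ℝ) < 1/2)
  rw [Metric.eventually_nhds_iff] at hlo
  obtain ⟨δ, hδ, hball⟩ := hlo
  set t : ℝ := min (δ/2) (min (1/2) (4*lam)) with ht
  have ht0 : 0 < t := by positivity
  have ht1 : t ≤ δ/2 := min_le_left _ _
  have ht2 : t ≤ 1/2 := le_trans (min_le_right _ _) (min_le_left _ _)
  have ht3 : t ≤ 4*lam := le_trans (min_le_right _ _) (min_le_right _ _)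
  -- near zero estimate
  have hnear : ∀ z, -t ≤ z → z < 0 → (1/2) * (-z) ≤ 1 - |S z| := by
    intro z hz1 hz2
    have hd : dist z 0 < δ := by
      rw [Real.dist_eq, sub_zero, abs_of_neg hz2]; linarith
    have := hball hd
    simp only [hS0, sub_zero, smul_eq_mul, mul_one, Real.norm_eq_abs] at this
    have habs : |S z - 1 - z| ≤ 1/2 * (-z) := by
      rwa [abs_of_neg hz2] at this
    have h1 : S z - 1 - z ≤ 1/2 * (-z) := le_trans (le_abs_self _) habs
    have h2 : -(1/2 * (-z)) ≤ S z - 1 - z := neg_le_of_abs_le habs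
    have hSpos : 0 < S z := by nlinarith
    rw [abs_of_pos hSpos]
    linarith
  -- compact part
  rcases le_or_gt (4*lam) t with hcase | hcase
  · -- t = 4*lam, near-zero covers everything
    refine ⟨1/2, by norm_num, fun z hz => hnear z (by linarith [hz.1]) hz.2⟩
  · have hsub : Set.Icc (-(4*lam)) (-t) ⊆ Set.Icc (-(4*lam)) 0 := by
      apply Set.Icc_subset_Icc le_rfl; linarith
    have hcf : ContinuousOn (fun z => 1 - |S z|) (Set.Icc (-(4*lam)) (-t)) := by
      exact continuousOn_const.sub ((hcont.mono hsub).abs)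
    obtain ⟨z₀, hz₀, hmin⟩ := (isCompact_Icc).exists_isMinOn
      (Set.nonempty_Icc.mpr (by linarith)) hcf
    have hz₀' : z₀ ∈ Set.Ico (-(4*lam)) 0 := ⟨hz₀.1, by linarith [hz₀.2]⟩
    have hm : 0 < 1 - |S z₀| := by linarith [hSlt z₀ hz₀']
    set m := 1 - |S z₀| with hmdef
    refine ⟨min (1/2) (m/(4*lam)), by positivity, fun z hz => ?_⟩
    rcases le_or_gt (-t) z with hzt | hzt
    · have := hnear z hzt hz.2
      have hc : min (1/2) (m/(4*lam)) ≤ 1/2 := min_le_left _ _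
      nlinarith [hz.2]
    · have hzmem : z ∈ Set.Icc (-(4*lam)) (-t) := ⟨hz.1, le_of_lt hzt⟩
      have h1 : m ≤ 1 - |S z| := hmin hzmem
      have hc : min (1/2) (m/(4*lam)) ≤ m/(4*lam) := min_le_right _ _
      have h2 : min (1/2) (m/(4*lam)) * (-z) ≤ (m/(4*lam)) * (4*lam) := by
        apply mul_le_mul hc (by linarith [hz.1]) (by linarith [hz.2]) (by positivity)
      rw [div_mul_cancel₀] at h2
      · linarith
      · positivity

/-- 1D bound: `Σ_{k=1}^{K−1} 1/(1 − |S(s_k)|) ≤ C Δt⁻¹`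
where `Δt = λ/K²` and `s_k = −4ΔtK² sin²(πk/(2K))`, for any Runge-Kutta
stability function `S` that is continuous on `[−4λ, 0]`, satisfies `S(0) = 1`,
`|S(z)| < 1` on `[−4λ, 0)`, and `S′(0) = 1`. -/
theorem series_bound_1d (lam : ℝ) (hlam : 0 < lam) (S : ℝ → ℝ)
    (hcont : ContinuousOn S (Set.Icc (-(4 * lam)) 0))
    (hS0 : S 0 = 1)
    (hSlt : ∀ z ∈ Set.Ico (-(4 * lam)) 0, |S z| < 1)
    (hderiv : HasDerivAt S 1 0) :
    ∃ C > 0, ∀ K : ℕ, 2 ≤ K →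
      ∑ k ∈ Finset.Icc 1 (K - 1),
          1 / (1 - |S (-(4 * (lam / (K : ℝ) ^ 2) * (K : ℝ) ^ 2
            * Real.sin (π * (k : ℝ) / (2 * K)) ^ 2))|)
        ≤ C * (lam / (K : ℝ) ^ 2)⁻¹ := by
  obtain ⟨c, hc, hkey⟩ := key_lemma lam hlam S hcont hS0 hSlt hderiv
  refine ⟨1/(2*c), by positivity, fun K hK => ?_⟩
  have hK0 : (0:ℝ) < (K:ℝ) := by exact_mod_cast Nat.lt_of_lt_of_le (by norm_num) hK
  have hK2 : ((K:ℝ))^2 ≠ 0 := by positivity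
  have hterm : ∀ k ∈ Finset.Icc 1 (K-1),
      1 / (1 - |S (-(4 * (lam / (K : ℝ) ^ 2) * (K : ℝ) ^ 2
            * Real.sin (π * (k : ℝ) / (2 * K)) ^ 2))|)
      ≤ (K:ℝ)^2/(4*c*lam) * (1/(k:ℝ)^2) := by
    intro k hk
    rw [Finset.mem_Icc] at hk
    have hk1 : (1:ℝ) ≤ (k:ℝ) := by exact_mod_cast hk.1
    have hkK : (k:ℝ) < (K:ℝ) := by
      have : k < K := by omega
      exact_mod_cast this
    set x := π * (k:ℝ) / (2 * K) with hx
    have hx0 : 0 < x := by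
      apply div_pos (by positivity) (by positivity)
    have hx2 : x ≤ π/2 := by
      rw [hx, div_le_div_iff₀ (by positivity) (by norm_num)]
      have := pi_pos
      nlinarith
    have hsin_lb : (k:ℝ)/(K:ℝ) ≤ sin x := by
      have := Real.mul_le_sin (le_of_lt hx0) hx2
      have heq : 2/π * x = (k:ℝ)/(K:ℝ) := by
        rw [hx]; field_simp [pi_ne_zero]
      linarith [heq ▸ this]
    have hsin0 : 0 < sin x := lt_of_lt_of_le (by positivity) hsin_lb
    have hsin1 : sin x ≤ 1 := Real.sin_le_one x
    have harg : -(4 * (lam / (K : ℝ) ^ 2) * (K : ℝ) ^ 2 * sin x ^ 2)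
        = -(4 * lam * sin x ^ 2) := by
      field_simp
    rw [harg]
    have hs2 : sin x ^ 2 ≤ 1 := by nlinarith
    have hs2' : 0 < sin x ^ 2 := by positivity
    have hmem : -(4 * lam * sin x ^ 2) ∈ Set.Ico (-(4*lam)) 0 := by
      constructor
      · nlinarith
      · nlinarith
    have hk' := hkey _ hmem
    rw [neg_neg] at hk'
    have hlb : 4*c*lam*(k:ℝ)^2/(K:ℝ)^2 ≤ 1 - |S (-(4 * lam * sin x ^ 2))| := by
      have h1 : (k:ℝ)^2/(K:ℝ)^2 ≤ sin x ^ 2 := by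
        rw [← div_pow]
        exact pow_le_pow_left₀ (by positivity) hsin_lb 2
      have h2 := mul_le_mul_of_nonneg_left h1 (by positivity : (0:ℝ) ≤ 4*c*lam)
      have h3 : 4*c*lam*(k:ℝ)^2/(K:ℝ)^2 = 4*c*lam*((k:ℝ)^2/(K:ℝ)^2) := by ring
      have h4 : c * (4 * lam * sin x ^ 2) = 4*c*lam*sin x ^2 := by ring
      linarith
    have hlb0 : (0:ℝ) < 4*c*lam*(k:ℝ)^2/(K:ℝ)^2 := by positivity
    calc 1 / (1 - |S (-(4 * lam * sin x ^ 2))|)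
        ≤ 1 / (4*c*lam*(k:ℝ)^2/(K:ℝ)^2) := by
          apply one_div_le_one_div_of_le hlb0 hlb
      _ = (K:ℝ)^2/(4*c*lam) * (1/(k:ℝ)^2) := by
          field_simp
  calc ∑ k ∈ Finset.Icc 1 (K - 1),
          1 / (1 - |S (-(4 * (lam / (K : ℝ) ^ 2) * (K : ℝ) ^ 2
            * Real.sin (π * (k : ℝ) / (2 * K)) ^ 2))|)
      ≤ ∑ k ∈ Finset.Icc 1 (K-1), (K:ℝ)^2/(4*c*lam) * (1/(k:ℝ)^2) :=
        Finset.sum_le_sum hterm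
    _ = (K:ℝ)^2/(4*c*lam) * ∑ k ∈ Finset.Icc 1 (K-1), (1:ℝ)/(k:ℝ)^2 := by
        rw [Finset.mul_sum]
    _ ≤ (K:ℝ)^2/(4*c*lam) * 2 := by
        apply mul_le_mul_of_nonneg_left (sum_inv_sq_le _) (by positivity)
    _ = 1/(2*c) * (lam / (K : ℝ) ^ 2)⁻¹ := by
        rw [inv_div]
        field_simp
        ring
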